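/- If γ ≥ 4/3, then for every real number M > 0 there exists a unique R ∈ (r₀, ∞) such that 4πĀ ∫_{r₀}^{R} (1/r − 1/R)^{1/(γ−1)} r² dr = M; in particular M(R) → 0 as R → r₀⁺ and M(R) → ∞ as R → ∞. -/

import Mathlib

open Real Set Filter

/-- Modified integrand, continuous everywhere. -/
noncomputable def Gfun (r₀ p R r : ℝ) : ℝ :=
  (1 / max r r₀ - 1 / max R r₀) ^ p * (max r r₀) ^ 2

lemma Gfun_cont (r₀ p : ℝ) (hr₀ : 0 < r₀) (hp : 0 ≤ p) :
    Continuous (Function.uncurry (Gfun r₀ p)) := by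
  have hrpow : Continuous fun x : ℝ => x ^ p :=
    continuous_iff_continuousAt.mpr fun x => Real.continuousAt_rpow_const x p (Or.inr hp)
  have hmax2 : Continuous fun q : ℝ × ℝ => max q.2 r₀ := continuous_snd.max continuous_const
  have hmax1 : Continuous fun q : ℝ × ℝ => max q.1 r₀ := continuous_fst.max continuous_const
  have hne2 : ∀ q : ℝ × ℝ, max q.2 r₀ ≠ 0 := fun q => (lt_of_lt_of_le hr₀ (le_max_right _ _)).ne'
  have hne1 : ∀ q : ℝ × ℝ, max q.1 r₀ ≠ 0 := fun q => (lt_of_lt_of_le hr₀ (le_max_right _ _)).ne'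
  exact (hrpow.comp ((continuous_const.div hmax2 hne2).sub
    (continuous_const.div hmax1 hne1))).mul (hmax2.pow 2)

/-- The real integrand is interval integrable on intervals of positives. -/
lemma integrand_intble (p S a b : ℝ) (hp : 0 ≤ p) (ha : 0 < a) (hab : a ≤ b) :
    IntervalIntegrable (fun r : ℝ => (1 / r - 1 / S) ^ p * r ^ 2) MeasureTheory.volume a b := by
  apply ContinuousOn.intervalIntegrable
  rw [uIcc_of_le hab]
  have hne : ∀ x ∈ Icc a b, x ≠ 0 := fun x hx => (lt_of_lt_of_le ha hx.1).ne'
  have h1 : ContinuousOn (fun r : ℝ => 1 / r - 1 / S) (Icc a b) :=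
    (continuousOn_const.div continuousOn_id hne).sub continuousOn_const
  exact (h1.rpow_const fun x hx => Or.inr hp).mul ((continuous_pow 2).continuousOn)

/-- For γ ≥ 4/3, every positive total mass is attained by a unique equilibrium radius R > r₀;
moreover M(R) → 0 as R → r₀⁺ and M(R) → ∞ as R → ∞. -/
theorem stmt_3 (γ A g₀ r₀ : ℝ) (hγ : 1 < γ) (hγ' : 4 / 3 ≤ γ) (hA : 0 < A) (hg₀ : 0 < g₀)
    (hr₀ : 0 < r₀) :
    let Abar : ℝ := ((γ - 1) * g₀ / (γ * A)) ^ (1 / (γ - 1))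
    let M : ℝ → ℝ := fun R => 4 * π * Abar * ∫ r in r₀..R, (1 / r - 1 / R) ^ (1 / (γ - 1)) * r ^ 2
    (∀ m : ℝ, 0 < m → ∃! R : ℝ, r₀ < R ∧ M R = m) ∧
    Tendsto M (nhdsWithin r₀ (Ioi r₀)) (nhds 0) ∧
    Tendsto M atTop atTop := by
  intro Abar M
  set p : ℝ := 1 / (γ - 1) with hpdef
  have hγ1 : 0 < γ - 1 := by linarith
  have hp : 0 < p := by positivity
  have hp3 : p ≤ 3 := by
    rw [hpdef, div_le_iff₀ hγ1]; nlinarith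
  have hAbar : 0 < Abar := Real.rpow_pos_of_pos (by positivity) _
  set c : ℝ := 4 * π * Abar with hcdef
  have hc : 0 < c := by
    have := Real.pi_pos; positivity
  -- N : continuous version via Gfun
  set N : ℝ → ℝ := fun R => ∫ r in r₀..R, Gfun r₀ p R r with hNdef
  have hNcont : Continuous N := by
    exact intervalIntegral.continuous_parametric_intervalIntegral_of_continuous
      (Gfun_cont r₀ p hr₀ hp.le) continuous_id
  have hMN : ∀ R, r₀ ≤ R → M R = c * N R := by
    intro R hR
    have : ∫ r in r₀..R, (1 / r - 1 / R) ^ p * r ^ 2 = N R := by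
      apply intervalIntegral.integral_congr
      intro r hrmem
      rw [uIcc_of_le hR] at hrmem
      have h1 : max r r₀ = r := max_eq_left hrmem.1
      have h2 : max R r₀ = R := max_eq_left hR
      simp [Gfun, h1, h2]
    simp only [M, hcdef]
    rw [this]
  -- integrability
  have hible : ∀ S a b : ℝ, 0 < a → a ≤ b →
      IntervalIntegrable (fun r : ℝ => (1 / r - 1 / S) ^ p * r ^ 2) MeasureTheory.volume a b :=
    fun S a b ha hab => integrand_intble p S a b hp.le ha hab
  -- strict monotonicity on Ici r₀
  have hmono : StrictMonoOn M (Ici r₀) := by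
    intro a ha b hb hab
    rw [mem_Ici] at ha hb
    have ha0 : 0 < a := lt_of_lt_of_le hr₀ ha
    have hb0 : 0 < b := lt_of_lt_of_le hr₀ hb
    have key1 : (∫ r in r₀..a, (1 / r - 1 / a) ^ p * r ^ 2)
        ≤ ∫ r in r₀..a, (1 / r - 1 / b) ^ p * r ^ 2 := by
      apply intervalIntegral.integral_mono_on ha (hible a r₀ a hr₀ ha) (hible b r₀ a hr₀ ha)
      intro x hx
      have hx0 : 0 < x := lt_of_lt_of_le hr₀ hx.1
      have h1 : (0:ℝ) ≤ 1 / x - 1 / a := by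
        rw [sub_nonneg]; exact one_div_le_one_div_of_le hx0 hx.2
      have h2 : 1 / x - 1 / a ≤ 1 / x - 1 / b := by
        have : 1 / b ≤ 1 / a := one_div_le_one_div_of_le ha0 hab.le
        linarith
      exact mul_le_mul_of_nonneg_right (Real.rpow_le_rpow h1 h2 hp.le) (sq_nonneg x)
    have key2 : (0:ℝ) < ∫ r in a..b, (1 / r - 1 / b) ^ p * r ^ 2 := by
      apply intervalIntegral.intervalIntegral_pos_of_pos_on (hible b a b ha0 hab.le) _ hab
      intro x hx
      have hx0 : 0 < x := lt_trans ha0 hx.1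
      have h1 : (0:ℝ) < 1 / x - 1 / b := by
        rw [sub_pos]; exact one_div_lt_one_div_of_lt hx0 hx.2
      exact mul_pos (Real.rpow_pos_of_pos h1 p) (pow_pos hx0 2)
    have hsplit : (∫ r in r₀..a, (1 / r - 1 / b) ^ p * r ^ 2)
        + (∫ r in a..b, (1 / r - 1 / b) ^ p * r ^ 2)
        = ∫ r in r₀..b, (1 / r - 1 / b) ^ p * r ^ 2 :=
      intervalIntegral.integral_add_adjacent_intervals (hible b r₀ a hr₀ ha) (hible b a b ha0 hab.le)
    have : (∫ r in r₀..a, (1 / r - 1 / a) ^ p * r ^ 2)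
        < ∫ r in r₀..b, (1 / r - 1 / b) ^ p * r ^ 2 := by
      rw [← hsplit]; linarith
    simpa only [M] using mul_lt_mul_of_pos_left this hc
  -- continuity on Ici r₀
  have hMcont : ContinuousOn M (Ici r₀) := by
    apply ContinuousOn.congr (f := fun R => c * N R)
    · exact (continuous_const.mul hNcont).continuousOn
    · intro R hR; exact hMN R hR
  -- limit at r₀⁺
  have hNr₀ : N r₀ = 0 := by simp [hNdef]
  have hlim0 : Tendsto M (nhdsWithin r₀ (Ioi r₀)) (nhds 0) := by
    have h1 : Tendsto (fun R => c * N R) (nhdsWithin r₀ (Ioi r₀)) (nhds 0) := by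
      have := (hNcont.tendsto r₀).mono_left (nhdsWithin_le_nhds (s := Ioi r₀))
      rw [hNr₀] at this
      simpa using (tendsto_const_nhds (x := c)).mul this
    apply h1.congr'
    filter_upwards [self_mem_nhdsWithin] with R hR
    exact (hMN R (le_of_lt hR)).symm
  -- growth at infinity
  have hlimtop : Tendsto M atTop atTop := by
    set K : ℝ := (1 / 2 : ℝ) ^ p * r₀ ^ (3 - p) with hKdef
    have hK : 0 < K := by
      apply mul_pos (Real.rpow_pos_of_pos one_half_pos p) (Real.rpow_pos_of_pos hr₀ _)
    have hbound : ∀ R : ℝ, 2 * r₀ ≤ R → c * K * Real.log (R / 2 / r₀) ≤ M R := by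
      intro R hR
      have hR0 : 0 < R := by linarith
      have hhalf : r₀ ≤ R / 2 := by linarith
      have hhalf0 : 0 < R / 2 := by linarith
      have hRr₀ : r₀ ≤ R := by linarith
      -- pointwise bound on [r₀, R/2]
      have hpt : ∀ x ∈ Icc r₀ (R / 2), K * x⁻¹ ≤ (1 / x - 1 / R) ^ p * x ^ 2 := by
        intro x hx
        have hx0 : 0 < x := lt_of_lt_of_le hr₀ hx.1
        have h2x : 1 / (2 * x) ≤ 1 / x - 1 / R := by
          have hxR : 2 * x ≤ R := by nlinarith [hx.2]
          have h1 : 1 / R ≤ 1 / (2 * x) := one_div_le_one_div_of_le (by linarith) hxR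
          have h2 : 1 / (2 * x) + 1 / (2 * x) = 1 / x := by
            rw [← add_div, show (1:ℝ)+1 = 2 by norm_num, mul_comm, ← div_div,
              div_right_comm, div_self (two_ne_zero)]
          linarith
        have hb1 : ((1:ℝ) / (2 * x)) ^ p ≤ (1 / x - 1 / R) ^ p :=
          Real.rpow_le_rpow (by positivity) h2x hp.le
        have heq : ((1:ℝ) / (2 * x)) ^ p * x ^ 2 = (1 / 2 : ℝ) ^ p * x ^ (2 - p) := by
          have e1 : (1:ℝ) / (2 * x) = (1 / 2) * (1 / x) := by ring
          rw [e1, Real.mul_rpow (by norm_num) (by positivity), one_div x, Real.inv_rpow hx0.le,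
            mul_assoc, Real.rpow_sub hx0, div_eq_mul_inv, ← Real.rpow_natCast x 2]
          norm_num
          rw [div_eq_mul_inv, mul_comm]
          exact Or.inl rfl
        have hxlow : r₀ ^ (3 - p) * x⁻¹ ≤ x ^ (2 - p) := by
          have h1 : r₀ ^ (3 - p) ≤ x ^ (3 - p) :=
            Real.rpow_le_rpow hr₀.le hx.1 (by linarith)
          have h2 : x ^ (2 - p) = x ^ (3 - p) * x⁻¹ := by
            rw [← Real.rpow_neg_one x, ← Real.rpow_add hx0]; congr 1; ring
          rw [h2]
          exact mul_le_mul_of_nonneg_right h1 (by positivity)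
        calc K * x⁻¹ = (1 / 2 : ℝ) ^ p * (r₀ ^ (3 - p) * x⁻¹) := by rw [hKdef]; ring
          _ ≤ (1 / 2 : ℝ) ^ p * x ^ (2 - p) := by
              apply mul_le_mul_of_nonneg_left hxlow (by positivity)
          _ = ((1:ℝ) / (2 * x)) ^ p * x ^ 2 := heq.symm
          _ ≤ (1 / x - 1 / R) ^ p * x ^ 2 :=
              mul_le_mul_of_nonneg_right hb1 (sq_nonneg x)
      have hible2 : IntervalIntegrable (fun x : ℝ => K * x⁻¹) MeasureTheory.volume r₀ (R / 2) := by
        apply ContinuousOn.intervalIntegrable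
        rw [uIcc_of_le hhalf]
        exact continuousOn_const.mul (continuousOn_inv₀.mono fun x hx =>
          (lt_of_lt_of_le hr₀ hx.1).ne')
      have hint1 : K * Real.log (R / 2 / r₀) ≤ ∫ x in r₀..(R / 2), (1 / x - 1 / R) ^ p * x ^ 2 := by
        have h1 : ∫ x in r₀..(R / 2), K * x⁻¹ = K * Real.log (R / 2 / r₀) := by
          rw [intervalIntegral.integral_const_mul, integral_inv_of_pos hr₀ hhalf0]
        rw [← h1]
        exact intervalIntegral.integral_mono_on hhalf hible2 (hible R r₀ (R / 2) hr₀ hhalf) hpt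
      have hint2 : (∫ x in r₀..(R / 2), (1 / x - 1 / R) ^ p * x ^ 2)
          ≤ ∫ x in r₀..R, (1 / x - 1 / R) ^ p * x ^ 2 := by
        have hsplit := intervalIntegral.integral_add_adjacent_intervals
          (hible R r₀ (R / 2) hr₀ hhalf) (hible R (R / 2) R hhalf0 (by linarith))
        have hnn : (0:ℝ) ≤ ∫ x in (R / 2)..R, (1 / x - 1 / R) ^ p * x ^ 2 := by
          apply intervalIntegral.integral_nonneg (by linarith)
          intro x hx
          have hx0 : 0 < x := lt_of_lt_of_le hhalf0 hx.1
          have h1 : (0:ℝ) ≤ 1 / x - 1 / R := by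
            rw [sub_nonneg]; exact one_div_le_one_div_of_le hx0 hx.2
          positivity
        linarith
      calc c * K * Real.log (R / 2 / r₀) = c * (K * Real.log (R / 2 / r₀)) := by ring
        _ ≤ c * ∫ x in r₀..R, (1 / x - 1 / R) ^ p * x ^ 2 := by
            apply mul_le_mul_of_nonneg_left (le_trans hint1 hint2) hc.le
        _ = M R := rfl
    have haux : Tendsto (fun R : ℝ => c * K * Real.log (R / 2 / r₀)) atTop atTop := by
      apply Tendsto.const_mul_atTop (by positivity)
      apply Real.tendsto_log_atTop.comp
      apply Tendsto.atTop_div_const hr₀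
      exact Tendsto.atTop_div_const two_pos tendsto_id
    apply tendsto_atTop_mono' atTop _ haux
    filter_upwards [eventually_ge_atTop (2 * r₀)] with R hR
    exact hbound R hR
  refine ⟨?_, hlim0, hlimtop⟩
  intro m hm
  -- find R₂ with m ≤ M R₂
  obtain ⟨R₂, hmR₂, hR₂⟩ := ((hlimtop.eventually_ge_atTop m).and (eventually_gt_atTop r₀)).exists
  -- find R₁ ∈ (r₀, R₂) with M R₁ < m
  have hev : ∀ᶠ R in nhdsWithin r₀ (Ioi r₀), M R < m ∧ R ∈ Ioi r₀ ∧ R < R₂ := by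
    have h1 : ∀ᶠ R in nhdsWithin r₀ (Ioi r₀), M R < m := hlim0.eventually_lt_const hm
    have h2 : ∀ᶠ R in nhdsWithin r₀ (Ioi r₀), R < R₂ :=
      eventually_nhdsWithin_of_eventually_nhds (eventually_lt_nhds hR₂)
    exact h1.and (eventually_mem_nhdsWithin.and h2)
  obtain ⟨R₁, hMR₁, hR₁, hR₁₂⟩ := hev.exists
  rw [mem_Ioi] at hR₁
  have hcont' : ContinuousOn M (Icc R₁ R₂) :=
    hMcont.mono fun x hx => le_trans hR₁.le hx.1
  obtain ⟨R, hRmem, hMR⟩ := intermediate_value_Icc hR₁₂.le hcont' ⟨hMR₁.le, hmR₂⟩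
  have hRr₀ : r₀ < R := lt_of_lt_of_le hR₁ hRmem.1
  refine ⟨R, ⟨hRr₀, hMR⟩, ?_⟩
  rintro R' ⟨hR'1, hR'2⟩
  exact hmono.injOn hR'1.le hRr₀.le (hR'2.trans hMR.symm)
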